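/- If (e_n) is K-quasi-greedy and D-w-democratic in a real Banach space, then for any x and m, ||x − G_m(x)|| ≤ C(K,D) σ^w_{w(Λ_m)/2}(x), where Λ_m is the greedy set of G_m(x) and σ^w_u(x) is the best approximation error over sets of w-measure ≤ u with arbitrary coefficients. -/

import Mathlib

open Finset Filter

section Defs

variable {X : Type*} [NormedAddCommGroup X] [NormedSpace ℝ X]

/-- `wsum w A` is the `w`-measure of the finite set `A`. -/
def wsum (w : ℕ → ℝ) (A : Finset ℕ) : ℝ := ∑ i ∈ A, w i

/-- `e` is a normalized (Schauder) basis with biorthogonal functionals `E`. -/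
def NormalizedBasis (e : ℕ → X) (E : ℕ → X →L[ℝ] ℝ) : Prop :=
  (∀ n, ‖e n‖ = 1) ∧ (∀ n m, E n (e m) = if n = m then (1:ℝ) else 0) ∧
  ∀ x : X, Filter.Tendsto (fun N => ∑ n ∈ Finset.range N, E n x • e n)
    Filter.atTop (nhds x)

/-- `Λ` is a greedy set for `x`: every coefficient inside dominates every one outside. -/
def GreedySet (E : ℕ → X →L[ℝ] ℝ) (x : X) (Λ : Finset ℕ) : Prop :=
  ∀ n ∈ Λ, ∀ k, k ∉ Λ → |E k x| ≤ |E n x|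

/-- quasi-greedy with constant `K`. -/
def QuasiGreedy (e : ℕ → X) (E : ℕ → X →L[ℝ] ℝ) (K : ℝ) : Prop :=
  ∀ (x : X) (Λ : Finset ℕ), GreedySet E x Λ → ‖∑ n ∈ Λ, E n x • e n‖ ≤ K * ‖x‖

/-- `w`-almost greedy with constant `K`. -/
def WAlmostGreedy (w : ℕ → ℝ) (e : ℕ → X) (E : ℕ → X →L[ℝ] ℝ) (K : ℝ) : Prop :=
  ∀ (x : X) (Λ : Finset ℕ), GreedySet E x Λ →
    ∀ A : Finset ℕ, wsum w A ≤ wsum w Λ →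
      ‖x - ∑ n ∈ Λ, E n x • e n‖ ≤ K * ‖x - ∑ n ∈ A, E n x • e n‖

/-- `w`-democratic with constant `D`. -/
def WDemocratic (w : ℕ → ℝ) (e : ℕ → X) (D : ℝ) : Prop :=
  ∀ A B : Finset ℕ, wsum w A ≤ wsum w B →
    ‖∑ n ∈ A, e n‖ ≤ D * ‖∑ n ∈ B, e n‖

/-- best `m`-term (weighted) approximation error. -/
noncomputable def sigmaW (w : ℕ → ℝ) (e : ℕ → X) (u : ℝ) (x : X) : ℝ :=
  sInf {r | ∃ (A : Finset ℕ) (c : ℕ → ℝ), wsum w A ≤ u ∧ r = ‖x - ∑ n ∈ A, c n • e n‖}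

/-- expansional best (weighted) approximation error. -/
noncomputable def sigmaTildeW (w : ℕ → ℝ) (e : ℕ → X) (E : ℕ → X →L[ℝ] ℝ)
    (u : ℝ) (x : X) : ℝ :=
  sInf {r | ∃ A : Finset ℕ, wsum w A ≤ u ∧ r = ‖x - ∑ n ∈ A, E n x • e n‖}

/-- weighted fundamental function `φ^w`. -/
noncomputable def phiW (w : ℕ → ℝ) (e : ℕ → X) (u : ℝ) : ℝ :=
  sSup {r | ∃ A : Finset ℕ, wsum w A ≤ u ∧ r = ‖∑ n ∈ A, e n‖}

/-- the companion function `φ̂^w`. -/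
noncomputable def phiHatW (w : ℕ → ℝ) (e : ℕ → X) (v : ℝ) : ℝ :=
  sInf {r | ∃ A : Finset ℕ, v < wsum w A ∧ r = ‖∑ n ∈ A, e n‖}

/-- `w`-semi-greedy with constant `K`: some Chebyshev approximant on each greedy set
realizes the bound. -/
def WSemiGreedy (w : ℕ → ℝ) (e : ℕ → X) (E : ℕ → X →L[ℝ] ℝ) (K : ℝ) : Prop :=
  ∀ (x : X) (Λ : Finset ℕ), GreedySet E x Λ →
    ∃ c : ℕ → ℝ, ‖x - ∑ n ∈ Λ, c n • e n‖ ≤ K * sigmaW w e (wsum w Λ) x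

/-- a sequence of signs. -/
def SignVec (ε : ℕ → ℝ) : Prop := ∀ n, ε n = 1 ∨ ε n = -1

/-- `w`-superdemocratic with constant `D`. -/
def WSuperDemocratic (w : ℕ → ℝ) (e : ℕ → X) (D : ℝ) : Prop :=
  ∀ A B : Finset ℕ, wsum w A ≤ wsum w B → ∀ ε δ : ℕ → ℝ, SignVec ε → SignVec δ →
    ‖∑ n ∈ A, ε n • e n‖ ≤ D * ‖∑ n ∈ B, δ n • e n‖

/-- `β` bounds the partial-sum projections (basis constant bound). -/
def BasisConstBound (e : ℕ → X) (E : ℕ → X →L[ℝ] ℝ) (β : ℝ) : Prop :=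
  ∀ (x : X) (N : ℕ), ‖∑ n ∈ Finset.range N, E n x • e n‖ ≤ β * ‖x‖

/-- equivalence to the unit vector basis of `c₀`. -/
def EquivC0 (e : ℕ → X) : Prop :=
  ∃ c C : ℝ, 0 < c ∧ ∀ (A : Finset ℕ) (a : ℕ → ℝ),
    (∀ n ∈ A, c * |a n| ≤ ‖∑ m ∈ A, a m • e m‖) ∧
    (∀ M : ℝ, (∀ n ∈ A, |a n| ≤ M) → ‖∑ n ∈ A, a n • e n‖ ≤ C * M)

/-- conservative with constant `C`. -/
def Conservative (e : ℕ → X) (C : ℝ) : Prop :=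
  ∀ A B : Finset ℕ, A.card ≤ B.card → (∀ a ∈ A, ∀ b ∈ B, a < b) →
    ‖∑ n ∈ A, e n‖ ≤ C * ‖∑ n ∈ B, e n‖

/-- `X` has finite cotype. -/
def FiniteCotype (X : Type*) [NormedAddCommGroup X] [NormedSpace ℝ X] : Prop :=
  ∃ (q C : ℝ), 2 ≤ q ∧ 0 < C ∧ ∀ (n : ℕ) (x : Fin n → X),
    (∑ j, ‖x j‖ ^ q) ^ (1/q) ≤
      C * ((∑ ε : Fin n → Bool,
        ‖∑ j, (if ε j then (1:ℝ) else -1) • x j‖ ^ q) / 2 ^ n) ^ (1/q)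

end Defs

section Aux

variable {X : Type*} [NormedAddCommGroup X] [NormedSpace ℝ X]
variable {e : ℕ → X} {E : ℕ → X →L[ℝ] ℝ} {K D : ℝ} {w : ℕ → ℝ}

lemma coeff_sum (hb : ∀ n m, E n (e m) = if n = m then (1:ℝ) else 0)
    (A : Finset ℕ) (a : ℕ → ℝ) (k : ℕ) :
    E k (∑ n ∈ A, a n • e n) = if k ∈ A then a k else 0 := by
  rw [map_sum]
  have h : ∀ n ∈ A, E k (a n • e n) = if k = n then a n else 0 := by
    intro n _
    rw [map_smul, hb k n]
    simp only [smul_eq_mul, mul_ite, mul_one, mul_zero]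
  rw [Finset.sum_congr rfl h, Finset.sum_ite_eq]

lemma wsum_nonneg (hw : ∀ i, 0 < w i) (A : Finset ℕ) : 0 ≤ wsum w A :=
  Finset.sum_nonneg fun i _ => (hw i).le

lemma wsum_mono (hw : ∀ i, 0 < w i) {A B : Finset ℕ} (h : A ⊆ B) :
    wsum w A ≤ wsum w B :=
  Finset.sum_le_sum_of_subset_of_nonneg h fun i _ _ => (hw i).le

lemma conv1 (U g : X) {b t : ℝ} (ht : 0 < t) (hb : |b| ≤ t) :
    ∃ σ : ℝ, (σ = 1 ∨ σ = -1) ∧ ‖U + b • g‖ ≤ ‖U + (t * σ) • g‖ := by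
  obtain ⟨hb1, hb2⟩ := abs_le.1 hb
  set θ := (b + t) / (2 * t) with hθ
  have hθ0 : 0 ≤ θ := div_nonneg (by linarith) (by linarith)
  have hθ1 : θ ≤ 1 := by
    rw [hθ, div_le_one (by linarith)]; linarith
  have hid : U + b • g = θ • (U + t • g) + (1 - θ) • (U + (-t) • g) := by
    match_scalars
    · ring
    · rw [hθ]; field_simp; ring
  have hmax : ‖U + b • g‖ ≤ max ‖U + t • g‖ ‖U + (-t) • g‖ := by
    rw [hid]
    calc ‖θ • (U + t • g) + (1 - θ) • (U + (-t) • g)‖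
        ≤ ‖θ • (U + t • g)‖ + ‖(1 - θ) • (U + (-t) • g)‖ := norm_add_le _ _
      _ = θ * ‖U + t • g‖ + (1 - θ) * ‖U + (-t) • g‖ := by
          rw [norm_smul, norm_smul, Real.norm_eq_abs, Real.norm_eq_abs,
            abs_of_nonneg hθ0, abs_of_nonneg (by linarith)]
      _ ≤ θ * max ‖U + t • g‖ ‖U + (-t) • g‖ + (1 - θ) * max ‖U + t • g‖ ‖U + (-t) • g‖ :=
          add_le_add (mul_le_mul_of_nonneg_left (le_max_left _ _) hθ0)
            (mul_le_mul_of_nonneg_left (le_max_right _ _) (by linarith))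
      _ = max ‖U + t • g‖ ‖U + (-t) • g‖ := by ring
  rcases le_total ‖U + t • g‖ ‖U + (-t) • g‖ with h | h
  · exact ⟨-1, Or.inr rfl, by rw [max_eq_right h] at hmax; simpa using hmax⟩
  · exact ⟨1, Or.inl rfl, by rw [max_eq_left h] at hmax; simpa using hmax⟩

end Aux
section Aux2

variable {X : Type*} [NormedAddCommGroup X] [NormedSpace ℝ X]
variable {e : ℕ → X} {E : ℕ → X →L[ℝ] ℝ} {K D : ℝ} {w : ℕ → ℝ}

lemma cube_aux {t : ℝ} (ht : 0 < t) (a : ℕ → ℝ) (e : ℕ → X) :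
    ∀ (Γ : Finset ℕ) (u : X), (∀ n ∈ Γ, |a n| ≤ t) →
      ∃ ε : ℕ → ℝ, SignVec ε ∧
        ‖u + ∑ n ∈ Γ, a n • e n‖ ≤ ‖u + ∑ n ∈ Γ, (t * ε n) • e n‖ := by
  intro Γ
  induction Γ using Finset.induction_on with
  | empty =>
      intro u _
      exact ⟨fun _ => 1, fun _ => Or.inl rfl, by simp⟩
  | @insert k Γ hk ih =>
      intro u hf
      obtain ⟨ε, hε, h1⟩ := ih (u + a k • e k)
        (fun n hn => hf n (Finset.mem_insert_of_mem hn))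
      obtain ⟨σ, hσ, h2⟩ := conv1 (u + ∑ n ∈ Γ, (t * ε n) • e n) (e k) ht
        (hf k (Finset.mem_insert_self k Γ))
      refine ⟨Function.update ε k σ, ?_, ?_⟩
      · intro n
        by_cases hn : n = k
        · subst hn; rw [Function.update_self]; exact hσ
        · rw [Function.update_of_ne hn]; exact hε n
      · have hsum : ∑ n ∈ Γ, (t * Function.update ε k σ n) • e n
            = ∑ n ∈ Γ, (t * ε n) • e n := by
          refine Finset.sum_congr rfl fun n hn => ?_
          rw [Function.update_of_ne (ne_of_mem_of_not_mem hn hk)]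
        rw [Finset.sum_insert hk, Finset.sum_insert hk, hsum, Function.update_self]
        calc ‖u + (a k • e k + ∑ n ∈ Γ, a n • e n)‖
            = ‖u + a k • e k + ∑ n ∈ Γ, a n • e n‖ := by rw [add_assoc]
          _ ≤ ‖u + a k • e k + ∑ n ∈ Γ, (t * ε n) • e n‖ := h1
          _ = ‖u + ∑ n ∈ Γ, (t * ε n) • e n + a k • e k‖ := by
              congr 1; abel
          _ ≤ ‖u + ∑ n ∈ Γ, (t * ε n) • e n + (t * σ) • e k‖ := h2
          _ = ‖u + ((t * σ) • e k + ∑ n ∈ Γ, (t * ε n) • e n)‖ := by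
              congr 1; abel

lemma cube_sum {t : ℝ} (ht : 0 < t) (a : ℕ → ℝ) (e : ℕ → X)
    (Γ : Finset ℕ) (hf : ∀ n ∈ Γ, |a n| ≤ t) :
    ∃ ε : ℕ → ℝ, SignVec ε ∧
      ‖∑ n ∈ Γ, a n • e n‖ ≤ t * ‖∑ n ∈ Γ, ε n • e n‖ := by
  obtain ⟨ε, hε, h⟩ := cube_aux ht a e Γ 0 hf
  refine ⟨ε, hε, ?_⟩
  have : ∑ n ∈ Γ, (t * ε n) • e n = t • ∑ n ∈ Γ, ε n • e n := by
    rw [Finset.smul_sum]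
    exact Finset.sum_congr rfl fun n _ => by rw [smul_smul]
  rw [zero_add, zero_add, this, norm_smul, Real.norm_eq_abs, abs_of_pos ht] at h
  exact h

end Aux2
section Aux3

variable {X : Type*} [NormedAddCommGroup X] [NormedSpace ℝ X]
variable {e : ℕ → X} {E : ℕ → X →L[ℝ] ℝ} {K D : ℝ} {w : ℕ → ℝ}

lemma multiplier (hQG : QuasiGreedy e E K) (hK : 0 ≤ K) (z : X) :
    ∀ (N : ℕ) (Γ : Finset ℕ), Γ.card ≤ N → GreedySet E z Γ →
    ∀ (c : ℕ → ℝ) (γ : ℝ), 0 ≤ γ → (∀ n ∈ Γ, 0 ≤ c n ∧ c n ≤ γ) →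
    (∀ n ∈ Γ, ∀ m ∈ Γ, |E n z| ≤ |E m z| → c n ≤ c m) →
    ‖∑ n ∈ Γ, (c n * E n z) • e n‖ ≤ γ * (K * ‖z‖) := by
  intro N
  induction N with
  | zero =>
      intro Γ hcard _ c γ hγ _ _
      rw [Finset.card_eq_zero.1 (Nat.le_zero.1 hcard)]
      simp only [Finset.sum_empty, norm_zero]
      exact mul_nonneg hγ (mul_nonneg hK (norm_nonneg z))
  | succ N ih =>
      intro Γ hcard hΓ c γ hγ hc hmono
      rcases Γ.eq_empty_or_nonempty with rfl | hne
      · simp only [Finset.sum_empty, norm_zero]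
        exact mul_nonneg hγ (mul_nonneg hK (norm_nonneg z))
      · set γ₀ := Γ.inf' hne c with hγ₀def
        obtain ⟨n₀, hn₀, hn₀eq⟩ := Finset.exists_mem_eq_inf' hne c
        have hγ₀0 : 0 ≤ γ₀ := by rw [hγ₀def, hn₀eq]; exact (hc n₀ hn₀).1
        have hγ₀γ : γ₀ ≤ γ := by rw [hγ₀def, hn₀eq]; exact (hc n₀ hn₀).2
        have hinf : ∀ n ∈ Γ, γ₀ ≤ c n := fun n hn => Finset.inf'_le c hn
        set L := Γ.filter (fun n => γ₀ < c n) with hLdef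
        have hLsub : L ⊆ Γ := Finset.filter_subset _ _
        have hn₀L : n₀ ∉ L := by
          simp only [hLdef, Finset.mem_filter, not_and, not_lt]
          intro _
          rw [hγ₀def, hn₀eq]
        have hLcard : L.card ≤ N := by
          have hss : L ⊂ Γ := ⟨hLsub, fun hsub => hn₀L (hsub hn₀)⟩
          have := Finset.card_lt_card hss
          omega
        have hLgreedy : GreedySet E z L := by
          intro n hn k hk
          have hnΓ := hLsub hn
          by_cases hkΓ : k ∈ Γ
          · have hck : c k = γ₀ := by
              have : ¬ γ₀ < c k := fun h => hk (Finset.mem_filter.2 ⟨hkΓ, h⟩)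
              exact le_antisymm (not_lt.1 this) (hinf k hkΓ)
            have hcn : γ₀ < c n := (Finset.mem_filter.1 hn).2
            by_contra h
            have h' : |E n z| ≤ |E k z| := le_of_not_ge h
            have := hmono n hnΓ k hkΓ h'
            rw [hck] at this
            linarith
          · exact hΓ n hnΓ k hkΓ
        have hdec : ∑ n ∈ Γ, (c n * E n z) • e n
            = γ₀ • (∑ n ∈ Γ, E n z • e n) + ∑ n ∈ L, ((c n - γ₀) * E n z) • e n := by
          have hL' : ∑ n ∈ L, ((c n - γ₀) * E n z) • e n
              = ∑ n ∈ Γ, ((c n - γ₀) * E n z) • e n := by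
            refine Finset.sum_subset hLsub fun n hn hn' => ?_
            have : c n = γ₀ := by
              have : ¬ γ₀ < c n := fun h => hn' (Finset.mem_filter.2 ⟨hn, h⟩)
              exact le_antisymm (not_lt.1 this) (hinf n hn)
            rw [this]; simp
          rw [hL', Finset.smul_sum, ← Finset.sum_add_distrib]
          refine Finset.sum_congr rfl fun n _ => ?_
          rw [smul_smul, ← add_smul]
          congr 1
          ring
        rw [hdec]
        calc ‖γ₀ • (∑ n ∈ Γ, E n z • e n) + ∑ n ∈ L, ((c n - γ₀) * E n z) • e n‖
            ≤ ‖γ₀ • (∑ n ∈ Γ, E n z • e n)‖ + ‖∑ n ∈ L, ((c n - γ₀) * E n z) • e n‖ :=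
              norm_add_le _ _
          _ ≤ γ₀ * (K * ‖z‖) + (γ - γ₀) * (K * ‖z‖) := by
              refine add_le_add ?_ ?_
              · rw [norm_smul, Real.norm_eq_abs, abs_of_nonneg hγ₀0]
                exact mul_le_mul_of_nonneg_left (hQG z Γ hΓ) hγ₀0
              · refine ih L hLcard hLgreedy _ (γ - γ₀) (by linarith) ?_ ?_
                · intro n hn
                  exact ⟨by linarith [hinf n (hLsub hn)],
                    by linarith [(hc n (hLsub hn)).2]⟩
                · intro n hn m hm h
                  have := hmono n (hLsub hn) m (hLsub hm) h
                  linarith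
          _ = γ * (K * ‖z‖) := by ring

lemma trunc (hQG : QuasiGreedy e E K) (hK : 0 ≤ K) (z : X) (Γ : Finset ℕ)
    (hΓ : GreedySet E z Γ) {t : ℝ} (ht : 0 < t) (htle : ∀ n ∈ Γ, t ≤ |E n z|) :
    t * ‖∑ n ∈ Γ, (if E n z < 0 then (-1:ℝ) else 1) • e n‖ ≤ 2 * K * ‖z‖ := by
  set s : ℕ → ℝ := fun n => if E n z < 0 then (-1:ℝ) else 1 with hs
  set c : ℕ → ℝ := fun n => 1 - t / |E n z| with hc
  have habs : ∀ n ∈ Γ, 0 < |E n z| := fun n hn => lt_of_lt_of_le ht (htle n hn)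
  have hkey : ∀ n ∈ Γ, t * s n = E n z - c n * E n z := by
    intro n hn
    have h0 : |E n z| ≠ 0 := (habs n hn).ne'
    have : c n * E n z = E n z - t / |E n z| * E n z := by rw [hc]; ring
    rw [this]
    have : t / |E n z| * E n z = t * s n := by
      rcases lt_trichotomy (E n z) 0 with h | h | h
      · rw [hs]; simp only [if_pos h]
        rw [abs_of_neg h, div_neg, neg_mul, div_mul_cancel₀ t (ne_of_lt h)]
        ring
      · exfalso; rw [h] at h0; simp at h0
      · rw [hs]; simp only [if_neg (not_lt.2 h.le)]
        rw [abs_of_pos h, div_mul_cancel₀ t (ne_of_gt h)]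
        ring
    rw [this]; ring
  have hsum : ∑ n ∈ Γ, (t * s n) • e n
      = ∑ n ∈ Γ, E n z • e n - ∑ n ∈ Γ, (c n * E n z) • e n := by
    rw [← Finset.sum_sub_distrib]
    refine Finset.sum_congr rfl fun n hn => ?_
    rw [← sub_smul, hkey n hn]
  have hmul : ‖∑ n ∈ Γ, (c n * E n z) • e n‖ ≤ 1 * (K * ‖z‖) := by
    refine multiplier hQG hK z Γ.card Γ le_rfl hΓ c 1 zero_le_one ?_ ?_
    · intro n hn
      constructor
      · have : t / |E n z| ≤ 1 := (div_le_one (habs n hn)).2 (htle n hn)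
        rw [hc]; simp only; linarith
      · have : 0 ≤ t / |E n z| := div_nonneg ht.le (habs n hn).le
        rw [hc]; simp only; linarith
    · intro n hn m hm h
      have h1 : t / |E m z| ≤ t / |E n z| :=
        div_le_div_of_nonneg_left ht.le (habs n hn) h
      rw [hc]; simp only; linarith
  have : ∑ n ∈ Γ, (t * s n) • e n = t • ∑ n ∈ Γ, s n • e n := by
    rw [Finset.smul_sum]
    exact Finset.sum_congr rfl fun n _ => by rw [smul_smul]
  calc t * ‖∑ n ∈ Γ, s n • e n‖
      = ‖∑ n ∈ Γ, (t * s n) • e n‖ := by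
        rw [this, norm_smul, Real.norm_eq_abs, abs_of_pos ht]
    _ = ‖∑ n ∈ Γ, E n z • e n - ∑ n ∈ Γ, (c n * E n z) • e n‖ := by rw [hsum]
    _ ≤ ‖∑ n ∈ Γ, E n z • e n‖ + ‖∑ n ∈ Γ, (c n * E n z) • e n‖ := norm_sub_le _ _
    _ ≤ K * ‖z‖ + 1 * (K * ‖z‖) := add_le_add (hQG z Γ hΓ) hmul
    _ = 2 * K * ‖z‖ := by ring

end Aux3
section Aux4

variable {X : Type*} [NormedAddCommGroup X] [NormedSpace ℝ X]
variable {e : ℕ → X} {E : ℕ → X →L[ℝ] ℝ} {K D : ℝ} {w : ℕ → ℝ}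

lemma ind_of_sign (hb : ∀ n m, E n (e m) = if n = m then (1:ℝ) else 0)
    (hQG : QuasiGreedy e E K)
    (Γ : Finset ℕ) (s : ℕ → ℝ) (hs : ∀ n ∈ Γ, s n = 1 ∨ s n = -1)
    (σ : ℝ) (hσ : σ = 1 ∨ σ = -1) :
    ‖∑ n ∈ Γ.filter (fun n => s n = σ), e n‖ ≤ K * ‖∑ n ∈ Γ, s n • e n‖ := by
  set v := ∑ n ∈ Γ, s n • e n with hv
  have hcoeff : ∀ k, E k v = if k ∈ Γ then s k else 0 := fun k => coeff_sum hb Γ s k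
  set B := Γ.filter (fun n => s n = σ) with hB
  have hBsub : B ⊆ Γ := Finset.filter_subset _ _
  have habs1 : ∀ n ∈ Γ, |s n| = 1 := by
    intro n hn
    rcases hs n hn with h | h <;> rw [h] <;> norm_num
  have hgreedy : GreedySet E v B := by
    intro n hn k hk
    rw [hcoeff, hcoeff, if_pos (hBsub hn), habs1 n (hBsub hn)]
    by_cases hkΓ : k ∈ Γ
    · rw [if_pos hkΓ, habs1 k hkΓ]
    · rw [if_neg hkΓ]; norm_num
  have h := hQG v B hgreedy
  have hsum : ∑ n ∈ B, E n v • e n = σ • ∑ n ∈ B, e n := by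
    rw [Finset.smul_sum]
    refine Finset.sum_congr rfl fun n hn => ?_
    rw [hcoeff, if_pos (hBsub hn), (Finset.mem_filter.1 hn).2]
  rw [hsum, norm_smul, Real.norm_eq_abs] at h
  have : |σ| = 1 := by rcases hσ with h' | h' <;> rw [h'] <;> norm_num
  rw [this, one_mul] at h
  exact h

lemma sign_demo (hw : ∀ i, 0 < w i) (hD : WDemocratic w e D)
    (Γ T : Finset ℕ) (s : ℕ → ℝ) (hs : ∀ n ∈ Γ, s n = 1 ∨ s n = -1)
    (hwsum : wsum w Γ ≤ wsum w T) :
    ‖∑ n ∈ Γ, s n • e n‖ ≤ 2 * D * ‖∑ n ∈ T, e n‖ := by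
  set Γp := Γ.filter (fun n => s n = 1) with hΓp
  set Γm := Γ.filter (fun n => ¬ s n = 1) with hΓm
  have hsplit : ∑ n ∈ Γ, s n • e n = ∑ n ∈ Γp, e n - ∑ n ∈ Γm, e n := by
    have hbase := Finset.sum_filter_add_sum_filter_not Γ (fun n => s n = 1) (fun n => s n • e n)
    have e1 : ∑ n ∈ Γp, s n • e n = ∑ n ∈ Γp, e n :=
      Finset.sum_congr rfl fun n hn => by
        rw [(Finset.mem_filter.1 hn).2, one_smul]
    have e2 : ∑ n ∈ Γm, s n • e n = - ∑ n ∈ Γm, e n := by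
      rw [← Finset.sum_neg_distrib]
      refine Finset.sum_congr rfl fun n hn => ?_
      have hmem := Finset.mem_filter.1 hn
      have : s n = -1 := (hs n hmem.1).resolve_left hmem.2
      rw [this]
      simp
    rw [← hbase, ← hΓp, ← hΓm, e1, e2]
    abel
  have hp : wsum w Γp ≤ wsum w T :=
    (wsum_mono hw (Finset.filter_subset _ _)).trans hwsum
  have hm : wsum w Γm ≤ wsum w T :=
    (wsum_mono hw (Finset.filter_subset _ _)).trans hwsum
  calc ‖∑ n ∈ Γ, s n • e n‖
      = ‖∑ n ∈ Γp, e n - ∑ n ∈ Γm, e n‖ := by rw [hsplit]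
    _ ≤ ‖∑ n ∈ Γp, e n‖ + ‖∑ n ∈ Γm, e n‖ := norm_sub_le _ _
    _ ≤ D * ‖∑ n ∈ T, e n‖ + D * ‖∑ n ∈ T, e n‖ := add_le_add (hD Γp T hp) (hD Γm T hm)
    _ = 2 * D * ‖∑ n ∈ T, e n‖ := by ring

/-- With `s` the sign pattern of the coefficients of `z` on a greedy set `Γ`
whose coefficients all exceed `t > 0`, and `T ⊆ Γ`: `t ‖1_T‖ ≤ 4K³ ‖z‖`. -/
lemma trunc_ind (hb : ∀ n m, E n (e m) = if n = m then (1:ℝ) else 0)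
    (hQG : QuasiGreedy e E K) (hK : 0 ≤ K) (z : X) (Γ : Finset ℕ)
    (hΓ : GreedySet E z Γ) {t : ℝ} (ht : 0 < t) (htle : ∀ n ∈ Γ, t ≤ |E n z|)
    (T : Finset ℕ) (hT : T ⊆ Γ) :
    t * ‖∑ n ∈ T, e n‖ ≤ 4 * K ^ 3 * ‖z‖ := by
  set s : ℕ → ℝ := fun n => if E n z < 0 then (-1:ℝ) else 1 with hs
  have hssign : ∀ n, s n = 1 ∨ s n = -1 := by
    intro n; rw [hs]; by_cases h : E n z < 0 <;> simp [h]
  set v := ∑ n ∈ Γ, s n • e n with hv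
  -- t ‖v‖ ≤ 2 K ‖z‖
  have h1 : t * ‖v‖ ≤ 2 * K * ‖z‖ := trunc hQG hK z Γ hΓ ht htle
  -- ‖v_T‖ ≤ K ‖v‖ where v_T = ∑_{T} s n • e n
  set vT := ∑ n ∈ T, s n • e n with hvT
  have hcoeff : ∀ k, E k v = if k ∈ Γ then s k else 0 := fun k => coeff_sum hb Γ s k
  have habs1 : ∀ n, |s n| = 1 := by
    intro n; rcases hssign n with h | h <;> rw [h] <;> norm_num
  have hgreedyT : GreedySet E v T := by
    intro n hn k hk
    rw [hcoeff, hcoeff, if_pos (hT hn), habs1]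
    by_cases hkΓ : k ∈ Γ
    · rw [if_pos hkΓ, habs1]
    · rw [if_neg hkΓ]; norm_num
  have h2 : ‖vT‖ ≤ K * ‖v‖ := by
    have h := hQG v T hgreedyT
    have hsum : ∑ n ∈ T, E n v • e n = vT := by
      refine Finset.sum_congr rfl fun n hn => ?_
      rw [hcoeff, if_pos (hT hn)]
    rw [hsum] at h
    exact h
  -- ‖1_T‖ ≤ 2 K ‖vT‖
  have h3 : ‖∑ n ∈ T, e n‖ ≤ 2 * K * ‖vT‖ := by
    have hp := ind_of_sign hb hQG T s (fun n _ => hssign n) 1 (Or.inl rfl)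
    have hm := ind_of_sign hb hQG T s (fun n _ => hssign n) (-1) (Or.inr rfl)
    have hsplit : ∑ n ∈ T, e n
        = ∑ n ∈ T.filter (fun n => s n = 1), e n
          + ∑ n ∈ T.filter (fun n => s n = -1), e n := by
      rw [← Finset.sum_filter_add_sum_filter_not T (fun n => s n = 1) e]
      congr 1
      refine Finset.sum_congr (Finset.filter_congr fun n hn => ?_) fun _ _ => rfl
      constructor
      · intro h; exact (hssign n).resolve_left h
      · intro h; rw [h]; norm_num
    calc ‖∑ n ∈ T, e n‖
        = ‖∑ n ∈ T.filter (fun n => s n = 1), e n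
            + ∑ n ∈ T.filter (fun n => s n = -1), e n‖ := by rw [hsplit]
      _ ≤ ‖∑ n ∈ T.filter (fun n => s n = 1), e n‖
            + ‖∑ n ∈ T.filter (fun n => s n = -1), e n‖ := norm_add_le _ _
      _ ≤ K * ‖vT‖ + K * ‖vT‖ := add_le_add hp hm
      _ = 2 * K * ‖vT‖ := by ring
  -- combine
  calc t * ‖∑ n ∈ T, e n‖
      ≤ t * (2 * K * ‖vT‖) := mul_le_mul_of_nonneg_left h3 ht.le
    _ ≤ t * (2 * K * (K * ‖v‖)) := by
        refine mul_le_mul_of_nonneg_left ?_ ht.le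
        refine mul_le_mul_of_nonneg_left h2 (by positivity)
    _ = 2 * K * K * (t * ‖v‖) := by ring
    _ ≤ 2 * K * K * (2 * K * ‖z‖) := by
        refine mul_le_mul_of_nonneg_left h1 (by positivity)
    _ = 4 * K ^ 3 * ‖z‖ := by ring

/-- Projection bound for sets of small coefficients. -/
lemma small_proj (hb : ∀ n m, E n (e m) = if n = m then (1:ℝ) else 0)
    (hQG : QuasiGreedy e E K) (hK : 0 ≤ K) (hD : WDemocratic w e D) (hD0 : 0 ≤ D)
    (hw : ∀ i, 0 < w i) (z : X) (Γ : Finset ℕ)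
    (hΓ : GreedySet E z Γ) {t : ℝ} (ht : 0 < t) (htle : ∀ n ∈ Γ, t ≤ |E n z|)
    (T : Finset ℕ) (hT : T ⊆ Γ)
    (S : Finset ℕ) (f : ℕ → ℝ) (hf : ∀ n ∈ S, |f n| ≤ t)
    (hST : wsum w S ≤ wsum w T) :
    ‖∑ n ∈ S, f n • e n‖ ≤ 8 * D * K ^ 3 * ‖z‖ := by
  obtain ⟨ε, hε, h1⟩ := cube_sum ht f e S hf
  have h2 : ‖∑ n ∈ S, ε n • e n‖ ≤ 2 * D * ‖∑ n ∈ T, e n‖ :=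
    sign_demo hw hD S T ε (fun n _ => hε n) hST
  have h3 : t * ‖∑ n ∈ T, e n‖ ≤ 4 * K ^ 3 * ‖z‖ :=
    trunc_ind hb hQG hK z Γ hΓ ht htle T hT
  calc ‖∑ n ∈ S, f n • e n‖
      ≤ t * ‖∑ n ∈ S, ε n • e n‖ := h1
    _ ≤ t * (2 * D * ‖∑ n ∈ T, e n‖) := mul_le_mul_of_nonneg_left h2 ht.le
    _ = 2 * D * (t * ‖∑ n ∈ T, e n‖) := by ring
    _ ≤ 2 * D * (4 * K ^ 3 * ‖z‖) := by
        refine mul_le_mul_of_nonneg_left h3 (by positivity)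
    _ = 8 * D * K ^ 3 * ‖z‖ := by ring

lemma eq_proj_of_supp (hbasis : NormalizedBasis e E) (x : X) (Λ : Finset ℕ)
    (h0 : ∀ k, k ∉ Λ → E k x = 0) : x = ∑ n ∈ Λ, E n x • e n := by
  have hconv := hbasis.2.2 x
  have hev : ∀ᶠ N in atTop, ∑ n ∈ Finset.range N, E n x • e n = ∑ n ∈ Λ, E n x • e n := by
    filter_upwards [eventually_ge_atTop (Λ.sup id + 1)] with N hN
    refine (Finset.sum_subset ?_ ?_).symm
    · intro n hn
      rw [Finset.mem_range]
      have : n ≤ Λ.sup id := Finset.le_sup (f := id) hn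
      omega
    · intro n _ hn
      rw [h0 n hn, zero_smul]
  exact tendsto_nhds_unique hconv ((tendsto_congr' hev).2 tendsto_const_nhds)

end Aux4
section Aux5

variable {X : Type*} [NormedAddCommGroup X] [NormedSpace ℝ X]
variable {e : ℕ → X} {E : ℕ → X →L[ℝ] ℝ} {K D : ℝ} {w : ℕ → ℝ}

lemma key_bound (hw : ∀ i, 0 < w i) (hbasis : NormalizedBasis e E)
    (hQG : QuasiGreedy e E K) (hD : WDemocratic w e D)
    (hK1 : 1 ≤ K) (hD1 : 1 ≤ D)
    (x : X) (Λ : Finset ℕ) (hΛ : GreedySet E x Λ)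
    (A : Finset ℕ) (c : ℕ → ℝ) (hA : wsum w A ≤ wsum w Λ / 2) :
    ‖x - ∑ n ∈ Λ, E n x • e n‖
      ≤ (1 + K + 24 * D * K ^ 3) * ‖x - ∑ n ∈ A, c n • e n‖ := by
  have hb := hbasis.2.1
  have hK0 : 0 ≤ K := by linarith
  have hD0 : 0 ≤ D := by linarith
  have hDK : 0 ≤ D * K ^ 3 := by positivity
  have hC0 : (0:ℝ) ≤ 1 + K + 24 * D * K ^ 3 := by linarith
  rcases Λ.eq_empty_or_nonempty with rfl | hne
  · -- Λ empty forces A empty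
    have hwΛ : wsum w (∅ : Finset ℕ) = 0 := by simp [wsum]
    have hA0 : A = ∅ := by
      rcases A.eq_empty_or_nonempty with h | h
      · exact h
      · exfalso
        have : 0 < wsum w A := Finset.sum_pos (fun i _ => hw i) h
        rw [hwΛ] at hA
        linarith
    subst hA0
    simp only [Finset.sum_empty, sub_zero]
    nlinarith [norm_nonneg x]
  · set t := Λ.inf' hne (fun n => |E n x|) with htdef
    obtain ⟨n₀, hn₀, hn₀eq⟩ := Finset.exists_mem_eq_inf' hne (fun n => |E n x|)
    have htle : ∀ n ∈ Λ, t ≤ |E n x| := fun n hn => Finset.inf'_le _ hn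
    have hout : ∀ k, k ∉ Λ → |E k x| ≤ t := by
      intro k hk
      rw [htdef, hn₀eq]
      exact hΛ n₀ hn₀ k hk
    rcases le_or_gt t 0 with ht0 | ht
    · -- all coefficients outside Λ vanish, so x = P_Λ x
      have h0 : ∀ k, k ∉ Λ → E k x = 0 := fun k hk =>
        abs_eq_zero.1 (le_antisymm ((hout k hk).trans ht0) (abs_nonneg _))
      have hx := eq_proj_of_supp hbasis x Λ h0
      rw [← hx, sub_self, norm_zero]
      exact mul_nonneg hC0 (norm_nonneg _)
    · -- main case
      set y := ∑ n ∈ A, c n • e n with hy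
      set z := x - y with hz
      -- coefficient decay for z
      have hconv := hbasis.2.2 z
      have hterm0 : Tendsto (fun n => E n z • e n) atTop (nhds 0) := by
        have h1 : Tendsto (fun N => ∑ n ∈ Finset.range (N + 1), E n z • e n)
            atTop (nhds z) := hconv.comp (Filter.tendsto_add_atTop_nat 1)
        have h2 := h1.sub hconv
        rw [sub_self] at h2
        refine h2.congr fun N => ?_
        rw [Finset.sum_range_succ]
        abel
      have hterm : Tendsto (fun n => |E n z|) atTop (nhds 0) := by
        have h1 := hterm0.norm
        rw [norm_zero] at h1
        refine h1.congr fun n => ?_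
        rw [norm_smul, hbasis.1 n, mul_one, Real.norm_eq_abs]
      obtain ⟨N, hN⟩ := eventually_atTop.1 (hterm.eventually_lt_const ht)
      set Γ := (Finset.range N).filter (fun n => t ≤ |E n z|) with hΓdef
      have hΓmem : ∀ n, n ∈ Γ ↔ t ≤ |E n z| := by
        intro n
        rw [hΓdef, Finset.mem_filter, Finset.mem_range]
        constructor
        · exact fun h => h.2
        · intro h
          refine ⟨?_, h⟩
          by_contra hn
          push_neg at hn
          exact absurd h (not_le.2 (hN n hn))
      have hΓgreedy : GreedySet E z Γ := by
        intro n hn k hk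
        have h1 := (hΓmem n).1 hn
        have h2 : |E k z| < t := not_le.1 (fun h => hk ((hΓmem k).2 h))
        linarith
      have hΓcoeff : ∀ n ∈ Γ, t ≤ |E n z| := fun n hn => (hΓmem n).1 hn
      have hEz : ∀ n, n ∉ A → E n z = E n x := by
        intro n hn
        rw [hz, map_sub, hy, coeff_sum hb A c n, if_neg hn, sub_zero]
      have hΛA : Λ \ A ⊆ Γ := by
        intro n hn
        obtain ⟨hnΛ, hnA⟩ := Finset.mem_sdiff.1 hn
        refine (hΓmem n).2 ?_
        rw [hEz n hnA]
        exact htle n hnΛ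
      have hwAΛ : wsum w A ≤ wsum w (Λ \ A) := by
        have h1 : wsum w (Λ ∩ A) + wsum w (Λ \ A) = wsum w Λ :=
          Finset.sum_inter_add_sum_sdiff Λ A w
        have h2 : wsum w (Λ ∩ A) ≤ wsum w A := wsum_mono hw Finset.inter_subset_right
        linarith
      -- algebraic identity
      set U := Λ ∪ A with hU
      have hAU : A ⊆ U := Finset.subset_union_right
      have h1 : ∑ n ∈ U, E n x • e n
          = ∑ n ∈ Λ, E n x • e n + ∑ n ∈ A \ Λ, E n x • e n := by
        rw [hU, ← Finset.union_sdiff_self_eq_union,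
          Finset.sum_union Finset.disjoint_sdiff]
      have hyU : ∑ n ∈ U, E n y • e n = y := by
        rw [hy]
        have hco : ∀ n ∈ U, E n (∑ m ∈ A, c m • e m) • e n
            = (if n ∈ A then c n else 0) • e n := fun n _ => by
          rw [coeff_sum hb]
        rw [Finset.sum_congr rfl hco,
          ← Finset.sum_subset hAU (fun n _ hn => by rw [if_neg hn, zero_smul])]
        exact Finset.sum_congr rfl fun n hn => by rw [if_pos hn]
      have h2 : ∑ n ∈ U, E n x • e n = ∑ n ∈ U, E n z • e n + y := by
        have hco : ∀ n ∈ U, E n x • e n = E n z • e n + E n y • e n := by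
          intro n _
          rw [← add_smul]
          congr 1
          rw [hz, map_sub]
          ring
        rw [Finset.sum_congr rfl hco, Finset.sum_add_distrib, hyU]
      have h3 : ∑ n ∈ U, E n z • e n
          = ∑ n ∈ Γ, E n z • e n + ∑ n ∈ U \ Γ, E n z • e n
            - ∑ n ∈ Γ \ U, E n z • e n := by
        have hU' := Finset.sum_inter_add_sum_sdiff U Γ (fun n => E n z • e n)
        have hΓ' := Finset.sum_inter_add_sum_sdiff Γ U (fun n => E n z • e n)
        rw [Finset.inter_comm] at hU'
        rw [← hU', ← hΓ']
        abel
      have hid : x - ∑ n ∈ Λ, E n x • e n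
          = (z - ∑ n ∈ Γ, E n z • e n) - ∑ n ∈ U \ Γ, E n z • e n
            + ∑ n ∈ Γ \ U, E n z • e n + ∑ n ∈ A \ Λ, E n x • e n := by
        have e1 : ∑ n ∈ Λ, E n x • e n
            = ∑ n ∈ U, E n x • e n - ∑ n ∈ A \ Λ, E n x • e n := by
          rw [h1]; abel
        rw [e1, h2, h3, hz]
        abel
      -- bounds on the four pieces
      have bound1 : ‖z - ∑ n ∈ Γ, E n z • e n‖ ≤ (1 + K) * ‖z‖ := by
        calc ‖z - ∑ n ∈ Γ, E n z • e n‖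
            ≤ ‖z‖ + ‖∑ n ∈ Γ, E n z • e n‖ := norm_sub_le _ _
          _ ≤ ‖z‖ + K * ‖z‖ := add_le_add_right (hQG z Γ hΓgreedy) _
          _ = (1 + K) * ‖z‖ := by ring
      have hUdiffA : U \ Γ ⊆ A := by
        intro n hn
        obtain ⟨hnU, hnΓ⟩ := Finset.mem_sdiff.1 hn
        rcases Finset.mem_union.1 hnU with hnΛ | hnA
        · by_contra hnA
          exact hnΓ (hΛA (Finset.mem_sdiff.2 ⟨hnΛ, hnA⟩))
        · exact hnA
      have bound2 : ‖∑ n ∈ U \ Γ, E n z • e n‖ ≤ 8 * D * K ^ 3 * ‖z‖ := by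
        refine small_proj hb hQG hK0 hD hD0 hw z Γ hΓgreedy ht hΓcoeff
          (Λ \ A) hΛA (U \ Γ) (fun n => E n z) ?_ ?_
        · intro n hn
          have : ¬ t ≤ |E n z| := fun h => (Finset.mem_sdiff.1 hn).2 ((hΓmem n).2 h)
          linarith [not_le.1 this]
        · exact (wsum_mono hw hUdiffA).trans hwAΛ
      have bound3 : ‖∑ n ∈ Γ \ U, E n z • e n‖ ≤ 8 * D * K ^ 3 * ‖z‖ := by
        refine small_proj hb hQG hK0 hD hD0 hw z Γ hΓgreedy ht hΓcoeff
          Γ (subset_refl Γ) (Γ \ U) (fun n => E n z) ?_ (wsum_mono hw Finset.sdiff_subset)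
        · intro n hn
          have hnU := (Finset.mem_sdiff.1 hn).2
          have hnΛ : n ∉ Λ := fun h => hnU (Finset.mem_union.2 (Or.inl h))
          have hnA : n ∉ A := fun h => hnU (Finset.mem_union.2 (Or.inr h))
          show |E n z| ≤ t
          rw [hEz n hnA]
          exact hout n hnΛ
      have bound4 : ‖∑ n ∈ A \ Λ, E n x • e n‖ ≤ 8 * D * K ^ 3 * ‖z‖ := by
        refine small_proj hb hQG hK0 hD hD0 hw z Γ hΓgreedy ht hΓcoeff
          (Λ \ A) hΛA (A \ Λ) (fun n => E n x) ?_ ?_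
        · intro n hn
          exact hout n (Finset.mem_sdiff.1 hn).2
        · exact (wsum_mono hw Finset.sdiff_subset).trans hwAΛ
      calc ‖x - ∑ n ∈ Λ, E n x • e n‖
          = ‖(z - ∑ n ∈ Γ, E n z • e n) - ∑ n ∈ U \ Γ, E n z • e n
              + ∑ n ∈ Γ \ U, E n z • e n + ∑ n ∈ A \ Λ, E n x • e n‖ := by rw [hid]
        _ ≤ ‖(z - ∑ n ∈ Γ, E n z • e n) - ∑ n ∈ U \ Γ, E n z • e n
              + ∑ n ∈ Γ \ U, E n z • e n‖ + ‖∑ n ∈ A \ Λ, E n x • e n‖ := norm_add_le _ _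
        _ ≤ (‖(z - ∑ n ∈ Γ, E n z • e n) - ∑ n ∈ U \ Γ, E n z • e n‖
              + ‖∑ n ∈ Γ \ U, E n z • e n‖) + ‖∑ n ∈ A \ Λ, E n x • e n‖ :=
            add_le_add_left (norm_add_le _ _) _
        _ ≤ ((‖z - ∑ n ∈ Γ, E n z • e n‖ + ‖∑ n ∈ U \ Γ, E n z • e n‖)
              + ‖∑ n ∈ Γ \ U, E n z • e n‖) + ‖∑ n ∈ A \ Λ, E n x • e n‖ :=
            add_le_add_left (add_le_add_left (norm_sub_le _ _) _) _
        _ ≤ (((1 + K) * ‖z‖ + 8 * D * K ^ 3 * ‖z‖) + 8 * D * K ^ 3 * ‖z‖)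
              + 8 * D * K ^ 3 * ‖z‖ :=
            add_le_add (add_le_add (add_le_add bound1 bound2) bound3) bound4
        _ = (1 + K + 24 * D * K ^ 3) * ‖z‖ := by ring

end Aux5
/-- for a `K`-quasi-greedy, `D`-`w`-democratic basis,
`‖x - G_m(x)‖ ≤ C(K,D) σ^w_{w(Λ_m)/2}(x)`, with `C` depending only on `K` and `D`. -/
theorem stmt7 (K D : ℝ) :
    ∃ C : ℝ, ∀ (X : Type) [NormedAddCommGroup X] [NormedSpace ℝ X] [CompleteSpace X],
      ∀ (e : ℕ → X) (E : ℕ → X →L[ℝ] ℝ) (w : ℕ → ℝ),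
        (∀ i, 0 < w i) → NormalizedBasis e E →
          QuasiGreedy e E K → WDemocratic w e D →
            ∀ (x : X) (Λ : Finset ℕ), GreedySet E x Λ →
              ‖x - ∑ n ∈ Λ, E n x • e n‖ ≤
                C * sigmaW w e (wsum w Λ / 2) x := by
  refine ⟨1 + |K| + 24 * |D| * |K| ^ 3, ?_⟩
  intro X _ _ _ e E w hw hbasis hQG hD x Λ hΛ
  -- derive K ≥ 1 and D ≥ 1
  have he0 : ‖e 0‖ = 1 := hbasis.1 0
  have hb := hbasis.2.1
  have hK1 : 1 ≤ K := by
    have hg : GreedySet E (e 0) {0} := by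
      intro n hn k hk
      have hn0 : n = 0 := Finset.mem_singleton.1 hn
      have hk0 : k ≠ 0 := fun h => hk (Finset.mem_singleton.2 h)
      subst hn0
      rw [hb k 0, hb 0 0, if_neg hk0, if_pos rfl]
      norm_num
    have h := hQG (e 0) {0} hg
    rw [Finset.sum_singleton, hb 0 0, if_pos rfl, one_smul, he0, mul_one] at h
    linarith [he0 ▸ h]
  have hD1 : 1 ≤ D := by
    have h := hD {0} {0} le_rfl
    rw [Finset.sum_singleton, he0] at h
    linarith
  have hK0 : 0 < K := by linarith
  have hD0 : 0 < D := by linarith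
  have habsK : |K| = K := abs_of_pos hK0
  have habsD : |D| = D := abs_of_pos hD0
  set C' := 1 + K + 24 * D * K ^ 3 with hC'
  have hCeq : 1 + |K| + 24 * |D| * |K| ^ 3 = C' := by rw [habsK, habsD, hC']
  rw [hCeq]
  have hC'pos : 0 < C' := by
    have : 0 ≤ D * K ^ 3 := by positivity
    rw [hC']
    linarith
  -- the set defining sigmaW
  have hkey : ∀ r ∈ {r | ∃ (A : Finset ℕ) (c : ℕ → ℝ),
      wsum w A ≤ wsum w Λ / 2 ∧ r = ‖x - ∑ n ∈ A, c n • e n‖},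
      ‖x - ∑ n ∈ Λ, E n x • e n‖ ≤ C' * r := by
    rintro r ⟨A, c, hA, rfl⟩
    exact key_bound hw hbasis hQG hD hK1 hD1 x Λ hΛ A c hA
  have hnonempty : {r | ∃ (A : Finset ℕ) (c : ℕ → ℝ),
      wsum w A ≤ wsum w Λ / 2 ∧ r = ‖x - ∑ n ∈ A, c n • e n‖}.Nonempty := by
    refine ⟨‖x‖, ∅, fun _ => 0, ?_, by simp⟩
    have h1 : wsum w (∅ : Finset ℕ) = 0 := by simp [wsum]
    have h2 : 0 ≤ wsum w Λ := wsum_nonneg hw Λ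
    rw [h1]
    linarith
  have hdiv : ‖x - ∑ n ∈ Λ, E n x • e n‖ / C' ≤ sigmaW w e (wsum w Λ / 2) x := by
    rw [sigmaW]
    refine le_csInf hnonempty fun r hr => ?_
    rw [div_le_iff₀ hC'pos, mul_comm]
    exact hkey r hr
  calc ‖x - ∑ n ∈ Λ, E n x • e n‖
      = C' * (‖x - ∑ n ∈ Λ, E n x • e n‖ / C') := by
        field_simp
    _ ≤ C' * sigmaW w e (wsum w Λ / 2) x :=
        mul_le_mul_of_nonneg_left hdiv hC'pos.le
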